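/- Let f : ℝ^d → ℝ be convex and differentiable with minimum f* attained at x*. Let K ≥ 1, let σ ∈ [0,1], and let the sequences of the A-HPE framework be given: positive reals η_0,…,η_{K−1}, β_k = β_{k−1} + η_k with β_{−1} = 0, λ_k = η_k²/β_k, α_k = η_k/β_k, points x^0 = x_f^0, and for each k points x_f^{k+1} satisfying ‖∇f(x_f^{k+1}) + λ_k^{-1}(x_f^{k+1} − x_g^k)‖ ≤ σ λ_k^{-1}‖x_f^{k+1} − x_g^k‖ where x_g^k = α_k x^k + (1−α_k) x_f^k, and x^{k+1} = x^k − η_k ∇f(x_f^{k+1}). Then 2β_{K−1}(f(x_f^K) − f*) + (1−σ²) Σ_{k=0}^{K−1} α_k^{-2} ‖x_f^{k+1} − x_g^k‖² ≤ ‖x^0 − x*‖². -/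

import Mathlib

open Finset

lemma first_order {d : ℕ} {f : EuclideanSpace ℝ (Fin d) → ℝ}
    (hconv : ConvexOn ℝ Set.univ f) (hdiff : Differentiable ℝ f)
    (a b : EuclideanSpace ℝ (Fin d)) :
    f a + inner ℝ (gradient f a) (b - a) ≤ f b := by
  set φ : ℝ → ℝ := fun t => f (a + t • (b - a)) with hφ
  have hφconv : ConvexOn ℝ Set.univ φ := by
    have h := hconv.comp_affineMap (AffineMap.lineMap a b)
    have : (f ∘ (AffineMap.lineMap a b)) = φ := by
      funext t
      simp [hφ, AffineMap.lineMap_apply, Function.comp]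
      congr 1
      module
    rw [this] at h
    simpa using h
  have hg : HasDerivAt (fun t : ℝ => a + t • (b - a)) (b - a) 0 := by
    simpa using ((hasDerivAt_id (0:ℝ)).smul_const (b - a)).const_add a
  have hF : HasFDerivAt f (InnerProductSpace.toDual ℝ _ (gradient f a)) a :=
    (hdiff a).hasGradientAt.hasFDerivAt
  have hφd : HasDerivAt φ (inner ℝ (gradient f a) (b - a) : ℝ) 0 := by
    have hF' : HasFDerivAt f (InnerProductSpace.toDual ℝ _ (gradient f a)) (a + (0:ℝ) • (b - a)) := by
      simpa using hF
    have := hF'.comp_hasDerivAt 0 hg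
    exact this.congr_deriv (InnerProductSpace.toDual_apply_apply)
  have h01 : (0:ℝ) < 1 := one_pos
  have := hφconv.le_slope_of_hasDerivAt (Set.mem_univ 0) (Set.mem_univ 1) h01 hφd
  rw [slope_def_field] at this
  simp [hφ] at this ⊢
  linarith [this]

theorem ahpe_convergence {d : ℕ}
    (f : EuclideanSpace ℝ (Fin d) → ℝ)
    (hconv : ConvexOn ℝ Set.univ f) (hdiff : Differentiable ℝ f)
    (xstar : EuclideanSpace ℝ (Fin d)) (hmin : IsMinOn f Set.univ xstar)
    (K : ℕ) (hK : 1 ≤ K) (σ : ℝ) (hσ : σ ∈ Set.Icc (0 : ℝ) 1)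
    (η β lam α : ℕ → ℝ)
    (hηpos : ∀ k, 0 < η k)
    (hβ : ∀ k, β k = ∑ l ∈ Finset.range (k + 1), η l)
    (hlam : ∀ k, lam k = (η k) ^ 2 / β k)
    (hα : ∀ k, α k = η k / β k)
    (x xf xg : ℕ → EuclideanSpace ℝ (Fin d))
    (hx0 : x 0 = xf 0)
    (hxg : ∀ k < K, xg k = α k • x k + (1 - α k) • xf k)
    (hinexact : ∀ k < K,
      ‖gradient f (xf (k + 1)) + (lam k)⁻¹ • (xf (k + 1) - xg k)‖ ≤
        σ * (lam k)⁻¹ * ‖xf (k + 1) - xg k‖)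
    (hstep : ∀ k < K, x (k + 1) = x k - η k • gradient f (xf (k + 1))) :
    2 * β (K - 1) * (f (xf K) - f xstar) +
        (1 - σ ^ 2) * ∑ k ∈ Finset.range K, ((α k)⁻¹) ^ 2 * ‖xf (k + 1) - xg k‖ ^ 2 ≤
      ‖x 0 - xstar‖ ^ 2 := by
  set B : ℕ → ℝ := fun n => ∑ l ∈ Finset.range n, η l with hB
  set E : ℕ → ℝ := fun n => B n * (f (xf n) - f xstar) + ‖x n - xstar‖ ^ 2 / 2 with hE
  have hbpos : ∀ k, 0 < β k := by
    intro k
    rw [hβ]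
    exact Finset.sum_pos (fun i _ => hηpos i) Finset.nonempty_range_add_one
  have hBnn : ∀ k, 0 ≤ B k := by
    intro k
    exact Finset.sum_nonneg fun i _ => (hηpos i).le
  have key : ∀ k < K,
      E (k + 1) + (1 - σ ^ 2) / 2 * (((α k)⁻¹) ^ 2 * ‖xf (k + 1) - xg k‖ ^ 2) ≤ E k := by
    intro k hk
    have he : 0 < η k := hηpos k
    have hbk : 0 < β k := hbpos k
    have hBsucc : B (k + 1) = β k := by simp only [hB]; rw [hβ]
    have hbB : β k = B k + η k := by
      simp only [hB, hβ, Finset.sum_range_succ]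
    have hlampos : 0 < lam k := by
      rw [hlam]; exact div_pos (pow_pos he 2) hbk
    -- first order inequalities
    have h1' := first_order hconv hdiff (xf (k + 1)) xstar
    have h2' := first_order hconv hdiff (xf (k + 1)) (xf k)
    have h1 := mul_le_mul_of_nonneg_left h1' he.le
    have h2 := mul_le_mul_of_nonneg_left h2' (hBnn k)
    -- norm expansion of the x-step
    have hxk1 : x (k + 1) - xstar = (x k - xstar) - η k • gradient f (xf (k + 1)) := by
      rw [hstep k hk]; abel
    have hc : ‖x (k + 1) - xstar‖ ^ 2 =
        ‖x k - xstar‖ ^ 2 - 2 * (η k * inner ℝ (gradient f (xf (k + 1))) (x k - xstar)) +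
          (η k) ^ 2 * ‖gradient f (xf (k + 1))‖ ^ 2 := by
      rw [hxk1, norm_sub_sq_real, real_inner_smul_right, norm_smul, Real.norm_eq_abs,
        mul_pow, sq_abs, real_inner_comm (x k - xstar)]
    -- squared inexactness
    have hdsq := pow_le_pow_left₀ (norm_nonneg _) (hinexact k hk) 2
    rw [norm_add_sq_real, norm_smul, Real.norm_eq_abs, abs_of_pos (inv_pos.mpr hlampos)] at hdsq
    have h3 := mul_le_mul_of_nonneg_left hdsq (sq_nonneg (η k))
    -- key vector identity
    have hvec : (η k) • (xf (k + 1) - xstar) + B k • (xf (k + 1) - xf k)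
        = β k • (xf (k + 1) - xg k) + (η k) • (x k - xstar) := by
      rw [hxg k hk, hα k, hbB]
      have hne : B k + η k ≠ 0 := by
        have := hBnn k; positivity
      match_scalars <;> field_simp [hne] <;> ring
    have hinner := congrArg (fun w => (inner ℝ (gradient f (xf (k + 1))) w : ℝ)) hvec
    have hβA : β k = (lam k)⁻¹ * (η k) ^ 2 := by
      rw [hlam, inv_div]
      field_simp
    have hrel : (α k)⁻¹ = (lam k)⁻¹ * η k := by
      rw [hα, hlam, inv_div, inv_div]
      field_simp
    rw [hβA] at hinner
    simp only [inner_add_right, inner_sub_right, real_inner_smul_right, mul_pow] at hinner h1 h2 hc hdsq h3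
    simp only [hE]
    rw [hBsucc, hbB, hrel]
    ring_nf
    ring_nf at h1 h2 h3 hinner hc
    linarith [h1, h2, h3, hinner, hc]
  have main : ∀ N, N ≤ K →
      E N + (1 - σ ^ 2) / 2 * ∑ k ∈ Finset.range N, ((α k)⁻¹) ^ 2 * ‖xf (k + 1) - xg k‖ ^ 2
        ≤ E 0 := by
    intro N
    induction N with
    | zero => intro _; simp
    | succ n ih =>
      intro hNK
      have hn : n < K := Nat.lt_of_succ_le hNK
      have hih := ih (Nat.le_of_succ_le hNK)
      have hkey := key n hn
      rw [Finset.sum_range_succ, mul_add]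
      linarith
  have hm := main K le_rfl
  have hBK : B K = β (K - 1) := by
    simp only [hB]
    rw [hβ, Nat.sub_add_cancel hK]
  have hE0 : E 0 = ‖x 0 - xstar‖ ^ 2 / 2 := by
    simp [hE, hB]
  have hEK : E K = β (K - 1) * (f (xf K) - f xstar) + ‖x K - xstar‖ ^ 2 / 2 := by
    simp only [hE]
    rw [hBK]
  rw [hEK, hE0] at hm
  nlinarith [sq_nonneg ‖x K - xstar‖, hm]
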